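/- Let n ≥ 1 and let f, f′ : {−1,1}^n → ℝ with ‖f‖₂ > 0 and as_n(f) > 0. Then √(E_x[(f(x) − f′(x))²]) ≥ √( as_n(f) / (2n − as_n(f)/‖f‖₂²) ) − ‖f‖₂·√( 2·as_n(f′)/as_n(f) ), where the expectation is over uniform x ∈ {−1,1}^n. -/

import Mathlib

open scoped BigOperators

noncomputable section

namespace SensTF

/-- Flip the `i`-th bit of `x`. -/
def flip {n : ℕ} (x : Fin n → Bool) (i : Fin n) : Fin n → Bool :=
  Function.update x i (!(x i))

/-- Sensitivity `s(f,x) = (1/4) ∑_i |f(x) - f(x^{⊕i})|²`. -/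
def sens {n : ℕ} (f : (Fin n → Bool) → ℝ) (x : Fin n → Bool) : ℝ :=
  (1 / 4) * ∑ i : Fin n, |f x - f (flip x i)| ^ 2

/-- Average sensitivity `as_n(f) = 2^{-n} ∑_x s(f,x)`. -/
def avgSens (n : ℕ) (f : (Fin n → Bool) → ℝ) : ℝ :=
  (1 / 2 ^ n) * ∑ x : Fin n → Bool, sens f x

/-- `‖g‖₂ = √(2^{-n} ∑_x g(x)²)`. -/
def l2norm (n : ℕ) (g : (Fin n → Bool) → ℝ) : ℝ :=
  Real.sqrt ((1 / 2 ^ n) * ∑ x : Fin n → Bool, g x ^ 2)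

end SensTF

open SensTF

lemma sens_flip_flip {n : ℕ} (x : Fin n → Bool) (i : Fin n) :
    SensTF.flip (SensTF.flip x i) i = x := by
  funext j
  by_cases h : j = i <;> simp [SensTF.flip, Function.update, h]

lemma sum_flip {n : ℕ} (i : Fin n) (F : (Fin n → Bool) → ℝ) :
    ∑ x : Fin n → Bool, F (flip x i) = ∑ x : Fin n → Bool, F x :=
  Fintype.sum_bijective (flip · i)
    (Function.Involutive.bijective (fun x => sens_flip_flip x i)) _ _ (fun _ => rfl)

lemma avgSens_eq (n : ℕ) (f : (Fin n → Bool) → ℝ) :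
    avgSens n f = ((1 / 2 ^ n) * (1 / 4)) *
      ∑ p : (Fin n → Bool) × Fin n, (f p.1 - f (flip p.1 p.2)) ^ 2 := by
  rw [avgSens]
  simp only [Fintype.sum_prod_type, Finset.mul_sum, sens]
  exact Finset.sum_congr rfl fun x _ =>
    Finset.sum_congr rfl fun i _ => by rw [sq_abs]; ring

lemma avgSens_nonneg (n : ℕ) (f : (Fin n → Bool) → ℝ) : 0 ≤ avgSens n f := by
  rw [avgSens_eq]; positivity

lemma l2sq (n : ℕ) (f : (Fin n → Bool) → ℝ) :
    l2norm n f ^ 2 = (1 / 2 ^ n) * ∑ x : Fin n → Bool, f x ^ 2 := by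
  rw [l2norm, Real.sq_sqrt (by positivity)]

lemma avgSens_le (n : ℕ) (f : (Fin n → Bool) → ℝ) :
    avgSens n f ≤ n * l2norm n f ^ 2 := by
  rw [avgSens_eq, l2sq, Fintype.sum_prod_type]
  have key : ∑ x : Fin n → Bool, ∑ i : Fin n, (f x - f (flip x i)) ^ 2 ≤
      (4 * n) * ∑ x : Fin n → Bool, f x ^ 2 := by
    have h1 : ∑ x : Fin n → Bool, ∑ i : Fin n, (f x - f (flip x i)) ^ 2 ≤
        ∑ x : Fin n → Bool, ∑ i : Fin n, (2 * f x ^ 2 + 2 * f (flip x i) ^ 2) := by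
      apply Finset.sum_le_sum; intro x _; apply Finset.sum_le_sum; intro i _
      nlinarith [sq_nonneg (f x + f (flip x i))]
    have h2 : ∑ x : Fin n → Bool, ∑ i : Fin n, (2 * f x ^ 2 + 2 * f (flip x i) ^ 2)
        = (4 * n) * ∑ x : Fin n → Bool, f x ^ 2 := by
      rw [Finset.sum_comm]
      have : ∀ i : Fin n, ∑ x : Fin n → Bool, (2 * f x ^ 2 + 2 * f (flip x i) ^ 2)
          = 4 * ∑ x : Fin n → Bool, f x ^ 2 := by
        intro i
        rw [Finset.sum_add_distrib, ← Finset.mul_sum, ← Finset.mul_sum,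
          sum_flip i (fun x => f x ^ 2)]
        ring
      rw [Finset.sum_congr rfl (fun i _ => this i), Finset.sum_const]
      simp [Finset.card_univ]
      ring
    linarith
  calc ((1:ℝ) / 2 ^ n) * (1 / 4) * ∑ x : Fin n → Bool, ∑ i : Fin n, (f x - f (flip x i)) ^ 2
      ≤ (1 / 2 ^ n) * (1 / 4) * ((4 * n) * ∑ x : Fin n → Bool, f x ^ 2) := by
        apply mul_le_mul_of_nonneg_left key (by positivity)
    _ = n * ((1 / 2 ^ n) * ∑ x : Fin n → Bool, f x ^ 2) := by ring

lemma sqrt_avgSens_triangle (n : ℕ) (f g : (Fin n → Bool) → ℝ) :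
    Real.sqrt (avgSens n f) ≤ Real.sqrt (avgSens n g) +
      Real.sqrt (avgSens n (fun x => f x - g x)) := by
  set c : ℝ := (1 / 2 ^ n) * (1 / 4) with hc
  have hc0 : 0 ≤ c := by positivity
  set U : (Fin n → Bool) × Fin n → ℝ := fun p => g p.1 - g (flip p.1 p.2) with hU
  set V : (Fin n → Bool) × Fin n → ℝ := fun p => (f p.1 - g p.1) - (f (flip p.1 p.2) - g (flip p.1 p.2)) with hV
  have hAg : avgSens n g = c * ∑ p, U p ^ 2 := avgSens_eq n g
  have hAd : avgSens n (fun x => f x - g x) = c * ∑ p, V p ^ 2 := avgSens_eq n _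
  have hAf : avgSens n f = c * ∑ p, (U p + V p) ^ 2 := by
    rw [avgSens_eq]
    congr 1
    apply Finset.sum_congr rfl
    intro p _
    simp only [hU, hV]
    ring
  have cs : (∑ p, U p * V p) ^ 2 ≤ (∑ p, U p ^ 2) * ∑ p, V p ^ 2 :=
    Finset.sum_mul_sq_le_sq_mul_sq _ _ _
  have cross : c * ∑ p, U p * V p ≤
      Real.sqrt (c * ∑ p, U p ^ 2) * Real.sqrt (c * ∑ p, V p ^ 2) := by
    rw [← Real.sqrt_mul (by positivity)]
    calc c * ∑ p, U p * V p ≤ |c * ∑ p, U p * V p| := le_abs_self _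
      _ = Real.sqrt ((c * ∑ p, U p * V p) ^ 2) := (Real.sqrt_sq_eq_abs _).symm
      _ ≤ Real.sqrt (c * (∑ p, U p ^ 2) * (c * ∑ p, V p ^ 2)) := by
          apply Real.sqrt_le_sqrt
          have : (c * ∑ p, U p * V p) ^ 2 = c ^ 2 * (∑ p, U p * V p) ^ 2 := by ring
          rw [this]
          calc c ^ 2 * (∑ p, U p * V p) ^ 2
              ≤ c ^ 2 * ((∑ p, U p ^ 2) * ∑ p, V p ^ 2) := by
                apply mul_le_mul_of_nonneg_left cs (by positivity)
            _ = c * (∑ p, U p ^ 2) * (c * ∑ p, V p ^ 2) := by ring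
  have key : avgSens n f ≤
      (Real.sqrt (avgSens n g) + Real.sqrt (avgSens n (fun x => f x - g x))) ^ 2 := by
    have expand : (Real.sqrt (avgSens n g) + Real.sqrt (avgSens n (fun x => f x - g x))) ^ 2
        = avgSens n g + avgSens n (fun x => f x - g x) +
          2 * (Real.sqrt (avgSens n g) * Real.sqrt (avgSens n (fun x => f x - g x))) := by
      rw [add_sq, Real.sq_sqrt (avgSens_nonneg n g), Real.sq_sqrt (avgSens_nonneg n _)]
      ring
    rw [expand, hAf, hAg, hAd]
    have sumexp : (∑ p, (U p + V p) ^ 2)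
        = ∑ p, U p ^ 2 + ∑ p, V p ^ 2 + 2 * ∑ p, U p * V p := by
      have : ∀ p : (Fin n → Bool) × Fin n,
          (U p + V p) ^ 2 = U p ^ 2 + V p ^ 2 + 2 * (U p * V p) := fun p => by ring
      rw [Finset.sum_congr rfl (fun p _ => this p), Finset.sum_add_distrib,
        Finset.sum_add_distrib, ← Finset.mul_sum]
    rw [sumexp]
    nlinarith [cross]
  calc Real.sqrt (avgSens n f)
      ≤ Real.sqrt ((Real.sqrt (avgSens n g) + Real.sqrt (avgSens n (fun x => f x - g x))) ^ 2) :=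
        Real.sqrt_le_sqrt key
    _ = _ := by
        rw [Real.sqrt_sq (by positivity)]

/-- Lemma: RMSE lower bound from average sensitivities, `α = 2`.
For any `f, f' : {±1}ⁿ → ℝ` with `‖f‖₂ > 0` and `as_n(f) > 0`:
`√(E[(f−f')²]) ≥ √(as_n(f)/(2n − as_n(f)/‖f‖₂²)) − ‖f‖₂·√(2·as_n(f')/as_n(f))`. -/
theorem statement7 (n : ℕ) (hn : 1 ≤ n) (f f' : (Fin n → Bool) → ℝ)
    (hf : 0 < l2norm n f) (has : 0 < avgSens n f) :
    Real.sqrt ((1 / 2 ^ n) * ∑ x : Fin n → Bool, (f x - f' x) ^ 2) ≥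
      Real.sqrt (avgSens n f / (2 * n - avgSens n f / l2norm n f ^ 2)) -
        l2norm n f * Real.sqrt (2 * avgSens n f' / avgSens n f) := by
  have hn0 : (0:ℝ) < n := by exact_mod_cast hn
  set A := avgSens n f with hA
  set B := avgSens n f' with hBdef
  set L := l2norm n f with hL
  set D := Real.sqrt ((1 / 2 ^ n) * ∑ x : Fin n → Bool, (f x - f' x) ^ 2) with hD
  have hB0 : 0 ≤ B := avgSens_nonneg n f'
  have hL2 : 0 < L ^ 2 := by positivity
  have hALn : A ≤ n * L ^ 2 := avgSens_le n f
  have hDnn : 0 ≤ D := Real.sqrt_nonneg _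
  have hDl2 : D = l2norm n (fun x => f x - f' x) := rfl
  -- triangle + bound
  have htri : Real.sqrt A ≤ Real.sqrt B + Real.sqrt (avgSens n (fun x => f x - f' x)) :=
    sqrt_avgSens_triangle n f f'
  have hgbound : avgSens n (fun x => f x - f' x) ≤ n * D ^ 2 := by
    rw [hDl2]; exact avgSens_le n _
  have hsg : Real.sqrt (avgSens n (fun x => f x - f' x)) ≤ Real.sqrt n * D := by
    calc Real.sqrt (avgSens n (fun x => f x - f' x)) ≤ Real.sqrt (n * D ^ 2) :=
          Real.sqrt_le_sqrt hgbound
      _ = Real.sqrt n * D := by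
          rw [Real.sqrt_mul hn0.le, Real.sqrt_sq hDnn]
  have hkey : Real.sqrt A - Real.sqrt B ≤ Real.sqrt n * D := by linarith
  -- first term bound
  have hdenom : (n:ℝ) ≤ 2 * n - A / L ^ 2 := by
    have : A / L ^ 2 ≤ n := by
      rw [div_le_iff₀ hL2]; linarith
    linarith
  have h1 : Real.sqrt (A / (2 * n - A / L ^ 2)) ≤ Real.sqrt A / Real.sqrt n := by
    rw [← Real.sqrt_div has.le]
    apply Real.sqrt_le_sqrt
    apply div_le_div_of_nonneg_left has.le hn0 hdenom
  -- second term bound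
  have h2 : Real.sqrt B / Real.sqrt n ≤ L * Real.sqrt (2 * B / A) := by
    rw [← Real.sqrt_div hB0, ← Real.sqrt_sq hf.le, ← Real.sqrt_mul (sq_nonneg L)]
    apply Real.sqrt_le_sqrt
    have h12 : 1 / (n:ℝ) ≤ 2 * L ^ 2 / A := by
      rw [div_le_div_iff₀ hn0 has]
      nlinarith
    calc B / n = B * (1 / n) := by ring
      _ ≤ B * (2 * L ^ 2 / A) := mul_le_mul_of_nonneg_left h12 hB0
      _ = L ^ 2 * (2 * B / A) := by ring
  have hfinal : (Real.sqrt A - Real.sqrt B) / Real.sqrt n ≤ D := by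
    rw [div_le_iff₀ (Real.sqrt_pos.mpr hn0)]
    linarith [hkey, mul_comm D (Real.sqrt n)]
  have : Real.sqrt (A / (2 * n - A / L ^ 2)) - L * Real.sqrt (2 * B / A) ≤ D := by
    have := sub_div (Real.sqrt A) (Real.sqrt B) (Real.sqrt n)
    linarith [h1, h2, hfinal]
  linarith
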